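/- Let K be a field of characteristic zero containing a primitive cube root of unity, and let L be a finite Galois field extension of K with Gal(L/K) isomorphic to the symmetric group S₃. Then there exist α ∈ K^× not a square in K, an element s ∈ L with s² = α, an element β ∈ K(s)^× that is not a cube in K(s) and satisfies β·σ(β) ∈ (K^×)³ (where σ is the nontrivial K-automorphism of K(s)), and an element r ∈ L with r³ = β, such that L = K(s, r). -/

import Mathlib

open IntermediateField Module Polynomial

private lemma s3_conj : ∀ x y : Equiv.Perm (Fin 3),
    Equiv.Perm.sign x = 1 → Equiv.Perm.sign y ≠ 1 → y⁻¹ * x * y = x⁻¹ := by decide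

private lemma s3_mul : ∀ x y : Equiv.Perm (Fin 3),
    Equiv.Perm.sign x ≠ 1 → Equiv.Perm.sign y ≠ 1 → Equiv.Perm.sign (x * y) = 1 := by decide

set_option maxHeartbeats 1000000 in
/-- Every finite Galois extension `L/K` (char 0, `K` containing a primitive cube root of
unity) with Galois group `S₃` has the form `L = K(s, r)` with `s² = α ∈ K` not a square,
`r³ = β ∈ K(s)` not a cube, and `β·σ(β)` a cube in `Kˣ`, where `σ` is the nontrivial
`K`-automorphism of `K(s)`. -/
theorem stmt_9 {K : Type*} [Field K] [CharZero K] (ω : K) (hω : IsPrimitiveRoot ω 3)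
    {L : Type*} [Field L] [Algebra K L] [FiniteDimensional K L] [IsGalois K L]
    (hGal : Nonempty ((L ≃ₐ[K] L) ≃* Equiv.Perm (Fin 3))) :
    ∃ α : K, α ≠ 0 ∧ (¬∃ x : K, x ^ 2 = α) ∧
      ∃ s : L, s ^ 2 = algebraMap K L α ∧
        ∃ σ : K⟮s⟯ ≃ₐ[K] K⟮s⟯,
          σ ⟨s, mem_adjoin_simple_self K s⟩ = -⟨s, mem_adjoin_simple_self K s⟩ ∧
          ∃ β : K⟮s⟯, β ≠ 0 ∧ (¬∃ x : K⟮s⟯, x ^ 3 = β) ∧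
            (∃ γ : K, γ ≠ 0 ∧ β * σ β = algebraMap K K⟮s⟯ γ ^ 3) ∧
            ∃ r : L, r ^ 3 = (β : L) ∧ IntermediateField.adjoin K {s, r} = ⊤ := by
  classical
  haveI : CharZero L := charZero_of_injective_algebraMap (algebraMap K L).injective
  obtain ⟨e⟩ := hGal
  have hcardPerm : Fintype.card (Equiv.Perm (Fin 3)) = 6 := by
    rw [Fintype.card_perm, Fintype.card_fin]; rfl
  have hcardG : Fintype.card (L ≃ₐ[K] L) = 6 := by
    rw [Fintype.card_congr e.toEquiv, hcardPerm]
  have hcardA : Fintype.card (alternatingGroup (Fin 3)) = 3 := by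
    have h2 := two_mul_card_alternatingGroup (α := Fin 3)
    rw [hcardPerm] at h2; omega
  set H : Subgroup (L ≃ₐ[K] L) :=
    Subgroup.comap (e : (L ≃ₐ[K] L) →* Equiv.Perm (Fin 3)) (alternatingGroup (Fin 3)) with hHdef
  have hHmem : ∀ g : L ≃ₐ[K] L, g ∈ H ↔ Equiv.Perm.sign (e g) = 1 := fun g => by
    rw [hHdef, Subgroup.mem_comap]
    exact Equiv.Perm.mem_alternatingGroup
  haveI hHnormal : H.Normal := Subgroup.Normal.comap (alternatingGroup.normal) _
  have eH : H ≃ (alternatingGroup (Fin 3)) :=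
    { toFun := fun g => ⟨e g.1, Subgroup.mem_comap.mp g.2⟩
      invFun := fun p => ⟨e.symm p.1, Subgroup.mem_comap.mpr (by simpa using p.2)⟩
      left_inv := fun g => Subtype.ext (e.symm_apply_apply g.1)
      right_inv := fun p => Subtype.ext (e.apply_symm_apply p.1) }
  have hcardH : Fintype.card H = 3 := by rw [Fintype.card_congr eH, hcardA]
  set F : IntermediateField K L := IntermediateField.fixedField H with hFdef
  have hFL : finrank F L = 3 := by
    rw [hFdef, IntermediateField.finrank_fixedField_eq_card, Nat.card_eq_fintype_card, hcardH]
  have hKL : finrank K L = 6 := by rw [← IsGalois.card_aut_eq_finrank, Nat.card_eq_fintype_card, hcardG]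
  have hKF : finrank K F = 2 := by
    have h := Module.finrank_mul_finrank K F L
    rw [hFL, hKL] at h; omega
  have hFnebot : ¬ (F ≤ ⊥) := by
    intro hle
    have hF : F = ⊥ := le_antisymm hle bot_le
    rw [hF, IntermediateField.finrank_bot] at hKF; omega
  obtain ⟨t, htF, htbot⟩ := SetLike.not_le_iff_exists.mp hFnebot
  have hgen : ∀ x : L, x ∈ F → x ∉ (⊥ : IntermediateField K L) → K⟮x⟯ = F := by
    intro x hxF hxbot
    have hle : K⟮x⟯ ≤ F := by
      rw [IntermediateField.adjoin_le_iff]; simpa using hxF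
    have h1 : finrank K K⟮x⟯ ≠ 1 := by
      intro h
      rw [IntermediateField.finrank_eq_one_iff] at h
      exact hxbot (h ▸ mem_adjoin_simple_self K x)
    have h2 : finrank K F ≤ finrank K K⟮x⟯ := by
      have hpos : 0 < finrank K K⟮x⟯ := finrank_pos
      rw [hKF]; omega
    exact IntermediateField.eq_of_le_of_finrank_le hle h2
  have htint : IsIntegral K t := IsIntegral.of_finite K t
  have hdeg : (minpoly K t).natDegree = 2 := by
    rw [← IntermediateField.adjoin.finrank htint, hgen t htF htbot]; exact hKF
  set b : K := (minpoly K t).coeff 1 with hbdef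
  set c0 : K := (minpoly K t).coeff 0 with hc0def
  have hmono : (minpoly K t).Monic := minpoly.monic htint
  have hc2 : (minpoly K t).coeff 2 = 1 := by
    have h := hmono.coeff_natDegree; rwa [hdeg] at h
  have hev : t ^ 2 + algebraMap K L b * t + algebraMap K L c0 = 0 := by
    have h0 := minpoly.aeval K t
    rw [Polynomial.aeval_eq_sum_range, hdeg] at h0
    rw [Finset.sum_range_succ, Finset.sum_range_succ, Finset.sum_range_one, hc2] at h0
    simp only [Algebra.smul_def, map_one, pow_zero, mul_one, pow_one, one_mul] at h0
    linear_combination h0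
  set s : L := t + algebraMap K L (b / 2) with hsdef
  set α : K := (b / 2) ^ 2 - c0 with hαdef
  have hsF : s ∈ F := F.add_mem htF (F.algebraMap_mem _)
  have hsbot : s ∉ (⊥ : IntermediateField K L) := by
    intro hs
    apply htbot
    have ht' : t = s - algebraMap K L (b / 2) := by rw [hsdef]; ring
    rw [ht']
    exact sub_mem hs (IntermediateField.algebraMap_mem ⊥ _)
  have hs2 : s ^ 2 = algebraMap K L α := by
    rw [hsdef, hαdef, map_sub, map_pow, map_div₀, map_ofNat]
    field_simp
    linear_combination (4:L) * hev
  have hsne0 : s ≠ 0 := fun h => hsbot (h ▸ zero_mem ⊥)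
  have hα0 : α ≠ 0 := by
    intro h
    rw [h, map_zero] at hs2
    exact hsne0 ((pow_eq_zero_iff (two_ne_zero)).mp hs2)
  have hαns : ¬∃ x : K, x ^ 2 = α := by
    rintro ⟨x, hx⟩
    have hxL : (algebraMap K L x) ^ 2 = algebraMap K L α := by rw [← map_pow, hx]
    have hprod : (s - algebraMap K L x) * (s + algebraMap K L x) = 0 := by
      linear_combination hs2 - hxL
    rcases mul_eq_zero.mp hprod with h | h
    · rw [sub_eq_zero] at h
      exact hsbot (h ▸ IntermediateField.algebraMap_mem ⊥ x)
    · rw [add_eq_zero_iff_eq_neg] at h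
      exact hsbot (h ▸ neg_mem (IntermediateField.algebraMap_mem ⊥ x))
  have hKs : K⟮s⟯ = F := hgen s hsF hsbot
  haveI hGalKs : IsGalois K K⟮s⟯ := by
    rw [hKs]; exact IsGalois.of_fixedField_normal_subgroup H
  have hfinKs : finrank K K⟮s⟯ = 2 := by rw [hKs]; exact hKF
  have hfixKs : IntermediateField.fixingSubgroup K⟮s⟯ = H := by
    rw [hKs]; exact IntermediateField.fixingSubgroup_fixedField H
  have hKsL : finrank K⟮s⟯ L = 3 := by rw [hKs]; exact hFL
  have hcardAutKs : Fintype.card (K⟮s⟯ ≃ₐ[K] K⟮s⟯) = 2 := by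
    rw [← Nat.card_eq_fintype_card, IsGalois.card_aut_eq_finrank, hfinKs]
  obtain ⟨σ, hσne⟩ :=
    Fintype.exists_ne_of_one_lt_card (by rw [hcardAutKs]; norm_num) (1 : K⟮s⟯ ≃ₐ[K] K⟮s⟯)
  have hsint : IsIntegral K s := IsIntegral.of_finite K s
  have ext1 : ∀ f g : K⟮s⟯ ≃ₐ[K] K⟮s⟯,
      f ⟨s, mem_adjoin_simple_self K s⟩ = g ⟨s, mem_adjoin_simple_self K s⟩ → f = g := by
    intro f g h
    have hfg : (f : K⟮s⟯ →ₐ[K] K⟮s⟯) = (g : K⟮s⟯ →ₐ[K] K⟮s⟯) :=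
      (IntermediateField.adjoin.powerBasis hsint).algHom_ext h
    exact AlgEquiv.ext fun x => DFunLike.congr_fun hfg x
  have hcoeK : ∀ γ : K, ((algebraMap K K⟮s⟯ γ : K⟮s⟯) : L) = algebraMap K L γ := by
    intro γ
    rw [IsScalarTower.algebraMap_apply K K⟮s⟯ L γ]
    rfl
  have hsg2 : (⟨s, mem_adjoin_simple_self K s⟩ : K⟮s⟯) ^ 2 = algebraMap K K⟮s⟯ α := by
    apply Subtype.ext
    push_cast
    exact hs2
  have hsgs : σ ⟨s, mem_adjoin_simple_self K s⟩ = -⟨s, mem_adjoin_simple_self K s⟩ := by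
    have hσ2 : (σ ⟨s, mem_adjoin_simple_self K s⟩) ^ 2
        = (⟨s, mem_adjoin_simple_self K s⟩ : K⟮s⟯) ^ 2 := by
      rw [← map_pow, hsg2, AlgEquiv.commutes]
    have hprod : (σ ⟨s, mem_adjoin_simple_self K s⟩ - ⟨s, mem_adjoin_simple_self K s⟩)
        * (σ ⟨s, mem_adjoin_simple_self K s⟩ + ⟨s, mem_adjoin_simple_self K s⟩) = 0 := by
      linear_combination hσ2
    rcases mul_eq_zero.mp hprod with h | h
    · rw [sub_eq_zero] at h
      exact absurd (ext1 σ 1 (by simpa using h)) hσne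
    · rwa [add_eq_zero_iff_eq_neg] at h
  haveI : Fact (Nat.Prime 3) := ⟨by norm_num⟩
  haveI hcyc : IsCyclic (L ≃ₐ[K⟮s⟯] L) := by
    haveI : IsCyclic (IntermediateField.fixingSubgroup K⟮s⟯) := by
      apply isCyclic_of_prime_card (p := 3)
      rw [hfixKs, Nat.card_eq_fintype_card, hcardH]
    exact isCyclic_of_surjective _ (IntermediateField.fixingSubgroupEquiv K⟮s⟯).surjective
  have hωKs : IsPrimitiveRoot (algebraMap K K⟮s⟯ ω) 3 :=
    hω.map_of_injective (algebraMap K K⟮s⟯).injective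
  have hprim : (primitiveRoots (finrank K⟮s⟯ L) K⟮s⟯).Nonempty := by
    rw [hKsL]
    exact ⟨_, (mem_primitiveRoots (by norm_num)).mpr hωKs⟩
  obtain ⟨r, hrβ, hrtop⟩ := exists_root_adjoin_eq_top_of_isCyclic K⟮s⟯ L hprim
  rw [hKsL] at hrβ
  obtain ⟨β, hβ⟩ := hrβ
  have hβ' : (β : L) = r ^ 3 := hβ
  have hbotne : (⊥ : IntermediateField K⟮s⟯ L) ≠ ⊤ := by
    intro h
    have h1 : finrank K⟮s⟯ (⊥ : IntermediateField K⟮s⟯ L)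
        = finrank K⟮s⟯ (⊤ : IntermediateField K⟮s⟯ L) := by rw [h]
    rw [IntermediateField.finrank_bot, IntermediateField.finrank_top'] at h1
    rw [hKsL] at h1; omega
  have hrKs : r ∉ (⊥ : IntermediateField K⟮s⟯ L) := by
    intro hr
    have hle : IntermediateField.adjoin K⟮s⟯ {r} ≤ ⊥ :=
      IntermediateField.adjoin_le_iff.mpr (by simpa using hr)
    exact hbotne (le_antisymm (hrtop ▸ hle) bot_le).symm
  have hrne : r ≠ 0 := fun h => hrKs (h ▸ zero_mem _)
  have hβ0 : β ≠ 0 := by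
    intro h
    rw [h] at hβ'
    exact pow_ne_zero 3 hrne (by rw [← hβ']; exact ZeroMemClass.coe_zero _)
  obtain ⟨σL, hσL⟩ := AlgEquiv.restrictNormalHom_surjective (K₁ := K⟮s⟯) L σ
  have hcomm : ∀ x : K⟮s⟯, σL (x : L) = ((σ x : K⟮s⟯) : L) := by
    intro x
    rw [← hσL]
    exact (AlgEquiv.restrictNormalHom_apply K⟮s⟯ σL x).symm
  have hσLs : σL s = -s := by
    have h := hcomm ⟨s, mem_adjoin_simple_self K s⟩
    rw [hsgs] at h
    simpa using h
  have hσLH : σL ∉ H := by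
    intro hmem
    rw [← hfixKs, IntermediateField.mem_fixingSubgroup_iff] at hmem
    have hfix : σL s = s := hmem s (mem_adjoin_simple_self K s)
    rw [hσLs] at hfix
    have h2 : (2 : L) * s = 0 := by linear_combination -hfix
    rcases mul_eq_zero.mp h2 with h | h
    · exact two_ne_zero h
    · exact hsne0 h
  set ωL : L := algebraMap K L ω with hωLdef
  have hωL : IsPrimitiveRoot ωL 3 := hω.map_of_injective (algebraMap K L).injective
  have hfixu : ∀ (f : L ≃ₐ[K] L) (u : L), u ^ 3 = 1 → f u = u := by
    intro f u hu
    obtain ⟨k, -, rfl⟩ := hωL.eq_pow_of_pow_eq_one hu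
    rw [map_pow, hωLdef, AlgEquiv.commutes]
  have hHfix : ∀ g : L ≃ₐ[K] L, g ∈ H → ∀ x : K⟮s⟯, g (x : L) = x := by
    intro g hg x
    rw [← hfixKs, IntermediateField.mem_fixingSubgroup_iff] at hg
    exact hg x x.2
  have hroot : ∀ g : L ≃ₐ[K] L, (∀ x : K⟮s⟯, g (x : L) = x) →
      ∃ u : L, u ^ 3 = 1 ∧ g r = u * r := by
    intro g hg
    have h3 : (g r) ^ 3 = r ^ 3 := by
      rw [← map_pow, ← hβ', hg β, hβ']
    refine ⟨g r * r⁻¹, ?_, ?_⟩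
    · rw [mul_pow, h3, inv_pow, mul_inv_cancel₀ (pow_ne_zero 3 hrne)]
    · field_simp
  have hconj : ∀ g ∈ H, σL⁻¹ * g * σL = g⁻¹ := by
    intro g hg
    apply e.injective
    rw [map_mul, map_mul, map_inv, map_inv]
    exact s3_conj (e g) (e σL) ((hHmem g).mp hg) (fun h => hσLH ((hHmem σL).mpr h))
  have hone : ∀ x : L, (1 : L ≃ₐ[K] L) x = x := fun x => rfl
  have hHc : ∀ g ∈ H, g (r * σL r) = r * σL r := by
    intro g hg
    obtain ⟨u, hu3, hur⟩ := hroot g (hHfix g hg)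
    have hu0 : u ≠ 0 := by
      intro h; rw [h] at hu3; simp at hu3
    have hginv : g⁻¹ r = u⁻¹ * r := by
      have h1 : g⁻¹ (g r) = r := by
        rw [← AlgEquiv.mul_apply, inv_mul_cancel, hone]
      rw [hur, map_mul, hfixu g⁻¹ u hu3] at h1
      rw [eq_inv_mul_iff_mul_eq₀ hu0]
      exact h1
    have hgσr : g (σL r) = σL (g⁻¹ r) := by
      have h2 : (σL⁻¹ * g * σL) r = g⁻¹ r := by rw [hconj g hg]
      rw [AlgEquiv.mul_apply, AlgEquiv.mul_apply] at h2
      have h3 := congrArg σL h2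
      rwa [← AlgEquiv.mul_apply σL σL⁻¹, mul_inv_cancel, hone] at h3
    have huinv3 : (u⁻¹) ^ 3 = 1 := by rw [inv_pow, hu3, inv_one]
    rw [map_mul, hur, hgσr, hginv, map_mul, hfixu σL u⁻¹ huinv3]
    have hcan : u * u⁻¹ = 1 := mul_inv_cancel₀ hu0
    linear_combination (r * σL r) * hcan
  have hσmul : σ * σ = 1 := by
    apply ext1
    rw [AlgEquiv.mul_apply, hsgs, map_neg, hsgs, neg_neg]
    rfl
  have hσL2fix : ∀ x : K⟮s⟯, (σL * σL) (x : L) = x := by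
    intro x
    rw [AlgEquiv.mul_apply, hcomm x, hcomm (σ x), ← AlgEquiv.mul_apply, hσmul]
    rfl
  have hσL2H : σL * σL ∈ H := by
    rw [← hfixKs, IntermediateField.mem_fixingSubgroup_iff]
    intro x hx
    exact hσL2fix ⟨x, hx⟩
  have hσLr0 : σL r ≠ 0 := fun h => hrne (σL.injective (by rw [map_zero]; exact h))
  have hc0' : r * σL r ≠ 0 := mul_ne_zero hrne hσLr0
  have hσLc : σL (r * σL r) = r * σL r := by
    obtain ⟨v, hv3, hvr⟩ := hroot (σL * σL) hσL2fix
    rw [AlgEquiv.mul_apply] at hvr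
    have hσc_eq : σL (r * σL r) = v * (r * σL r) := by
      rw [map_mul, hvr]; ring
    have h2 : (σL * σL) (r * σL r) = r * σL r := hHc _ hσL2H
    rw [AlgEquiv.mul_apply, hσc_eq, map_mul, hfixu σL v hv3, hσc_eq] at h2
    have hv2 : v * v = 1 := by
      have h4 : (v * v) * (r * σL r) = 1 * (r * σL r) := by linear_combination h2
      exact mul_right_cancel₀ hc0' h4
    have hv1 : v = 1 := by
      calc v = v * (v * v) := by rw [hv2, mul_one]
        _ = v ^ 3 := by ring
        _ = 1 := hv3
    rw [hσc_eq, hv1, one_mul]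
  have hallc : ∀ g : L ≃ₐ[K] L, g (r * σL r) = r * σL r := by
    intro g
    by_cases hg : g ∈ H
    · exact hHc g hg
    · have hgσ : g * σL ∈ H := by
        rw [hHmem, map_mul]
        exact s3_mul _ _ (fun h => hg ((hHmem g).mpr h)) (fun h => hσLH ((hHmem σL).mpr h))
      have hσinv : σL⁻¹ (r * σL r) = r * σL r := by
        conv_lhs => rw [← hσLc]
        rw [← AlgEquiv.mul_apply, inv_mul_cancel, hone]
      have hstep : (g * σL) (σL⁻¹ (r * σL r)) = g (r * σL r) := by
        rw [AlgEquiv.mul_apply]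
        congr 1
        rw [← AlgEquiv.mul_apply, mul_inv_cancel, hone]
      rw [← hstep, hσinv]
      exact hHc _ hgσ
  have hcbot : r * σL r ∈ (⊥ : IntermediateField K L) := by
    have htopfix : IntermediateField.fixingSubgroup (⊥ : IntermediateField K L) = ⊤ := by
      rw [eq_top_iff]
      intro g _
      rw [IntermediateField.mem_fixingSubgroup_iff]
      intro x hx
      rw [IntermediateField.mem_bot] at hx
      obtain ⟨y, rfl⟩ := hx
      exact g.commutes y
    have hf := IsGalois.fixedField_fixingSubgroup (⊥ : IntermediateField K L)
    rw [htopfix] at hf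
    rw [← hf]
    rintro ⟨g, -⟩
    exact hallc g
  rw [IntermediateField.mem_bot] at hcbot
  obtain ⟨γ, hγ⟩ := hcbot
  have hγ0 : γ ≠ 0 := by
    rintro rfl
    rw [map_zero] at hγ
    exact hc0' hγ.symm
  have hβσβ : β * σ β = algebraMap K K⟮s⟯ γ ^ 3 := by
    apply Subtype.ext
    rw [MulMemClass.coe_mul, SubmonoidClass.coe_pow, hcoeK, ← hcomm β, hβ', map_pow, hγ]
    ring
  have hncube : ¬∃ x : K⟮s⟯, x ^ 3 = β := by
    rintro ⟨x, hx⟩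
    have hx0 : (x : L) ≠ 0 := by
      intro h
      apply hβ0
      have : x = 0 := Subtype.ext h
      rw [this] at hx
      rw [← hx]
      norm_num
    have hx3 : (x : L) ^ 3 = r ^ 3 := by
      rw [← hβ']
      exact_mod_cast congrArg (Subtype.val) hx
    have h3 : (r * (x : L)⁻¹) ^ 3 = 1 := by
      rw [mul_pow, ← hx3, inv_pow, mul_inv_cancel₀ (pow_ne_zero 3 hx0)]
    obtain ⟨k, -, hk⟩ := hωL.eq_pow_of_pow_eq_one h3
    have hr_eq : r = ωL ^ k * (x : L) := by
      rw [hk]; field_simp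
    apply hrKs
    rw [IntermediateField.mem_bot]
    refine ⟨(algebraMap K K⟮s⟯ ω) ^ k * x, ?_⟩
    have : ((((algebraMap K K⟮s⟯ ω) ^ k * x : K⟮s⟯)) : L) = ωL ^ k * (x : L) := by
      rw [MulMemClass.coe_mul, SubmonoidClass.coe_pow, hcoeK, hωLdef]
    rw [show algebraMap K⟮s⟯ L ((algebraMap K K⟮s⟯ ω) ^ k * x) =
      ((((algebraMap K K⟮s⟯ ω) ^ k * x : K⟮s⟯)) : L) from rfl, this, ← hr_eq]
  have hfinal : IntermediateField.adjoin K {s, r} = ⊤ := by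
    have h1 := IntermediateField.adjoin_adjoin_left K {s} {r}
    rw [hrtop, IntermediateField.restrictScalars_top, Set.singleton_union] at h1
    exact h1.symm
  exact ⟨α, hα0, hαns, s, hs2, σ, hsgs, β, hβ0, hncube, ⟨γ, hγ0, hβσβ⟩, r, hβ'.symm, hfinal⟩
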